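/- In a distance-regular graph on N ≥ 2 vertices of diameter d, the effective resistance R_m between vertices at graph distance m is a strictly increasing function of m for 1 ≤ m ≤ d. -/

import Mathlib

open Matrix

/-- The four Moore–Penrose pseudoinverse conditions for real matrices. -/
def IsMoorePenrose {V : Type*} [Fintype V] [DecidableEq V] (L Lp : Matrix V V ℝ) : Prop :=
  L * Lp * L = L ∧ Lp * L * Lp = Lp ∧ (L * Lp)ᵀ = L * Lp ∧ (Lp * L)ᵀ = Lp * L

/-- Effective resistance between two nodes, from the pseudoinverse of the Laplacian. -/
def effRes {V : Type*} (Lp : Matrix V V ℝ) (α β : V) : ℝ :=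
  Lp α α + Lp β β - 2 * Lp α β

/-- Distance-regularity with diameter `d` and intersection numbers `b i`, `c i`. -/
def IsDistanceRegular {V : Type*} [Fintype V] (G : SimpleGraph V) (d : ℕ) (b c : ℕ → ℕ) : Prop :=
  G.Connected ∧ (∀ α β : V, G.dist α β ≤ d) ∧
  ∀ i, i ≤ d → ∀ α β : V, G.dist α β = i →
    ({γ : V | G.Adj β γ ∧ G.dist α γ = i + 1}.ncard = b i ∧
     {γ : V | G.Adj β γ ∧ G.dist α γ = i - 1}.ncard = c i)

set_option linter.unusedSectionVars false

namespace ERaux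

section Walks
variable {V : Type*} {G : SimpleGraph V}

lemma dist_getVert_le (hconn : G.Connected) {x y : V} (p : G.Walk x y) (j : ℕ) :
    G.dist x (p.getVert j) ≤ j := by
  induction p generalizing j with
  | nil => simpa [SimpleGraph.Walk.getVert] using SimpleGraph.dist_self (G := G) ▸ Nat.zero_le j
  | @cons u v w h q ih =>
    cases j with
    | zero => simp [SimpleGraph.Walk.getVert]
    | succ j =>
      rw [SimpleGraph.Walk.getVert_cons_succ]
      calc G.dist u (q.getVert j) ≤ G.dist u v + G.dist v (q.getVert j) :=
        hconn.dist_triangle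
      _ ≤ 1 + j := by
        gcongr
        · exact le_of_eq (SimpleGraph.dist_eq_one_iff_adj.mpr h)
        · exact ih j
      _ = j + 1 := by omega

lemma getVert_dist_le {x y : V} (p : G.Walk x y) (j : ℕ) :
    G.dist (p.getVert j) y ≤ p.length - j := by
  induction p generalizing j with
  | nil => simp [SimpleGraph.Walk.getVert]
  | @cons u v w h q ih =>
    cases j with
    | zero =>
      simpa [SimpleGraph.Walk.getVert] using SimpleGraph.dist_le (SimpleGraph.Walk.cons h q)
    | succ j =>
      rw [SimpleGraph.Walk.getVert_cons_succ]
      simpa using ih j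

lemma exists_intermediate (hconn : G.Connected) {x y : V} {j : ℕ} (hj : j ≤ G.dist x y) :
    ∃ z : V, G.dist x z = j ∧ G.dist z y = G.dist x y - j := by
  obtain ⟨p, hp⟩ := hconn.exists_walk_length_eq_dist x y
  refine ⟨p.getVert j, ?_⟩
  have h1 := dist_getVert_le hconn p j
  have h2 := getVert_dist_le p j
  rw [hp] at h2
  have h3 := hconn.dist_triangle (u := x) (v := p.getVert j) (w := y)
  omega

lemma exists_adj_dist (hconn : G.Connected) {x y : V} {i : ℕ} (h : G.dist x y = i + 1) :
    ∃ z : V, G.Adj z y ∧ G.dist x z = i := by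
  obtain ⟨z, hz1, hz2⟩ := exists_intermediate hconn (x := x) (y := y) (j := i) (by omega)
  rw [h] at hz2
  have : G.dist z y = 1 := by omega
  exact ⟨z, SimpleGraph.dist_eq_one_iff_adj.mp this, hz1⟩

end Walks

lemma mp_unique {n : Type*} [Fintype n] [DecidableEq n] {A X Y : Matrix n n ℝ}
    (hX : A * X * A = A ∧ X * A * X = X ∧ (A * X)ᵀ = A * X ∧ (X * A)ᵀ = X * A)
    (hY : A * Y * A = A ∧ Y * A * Y = Y ∧ (A * Y)ᵀ = A * Y ∧ (Y * A)ᵀ = Y * A) :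
    X = Y := by
  obtain ⟨hX1, hX2, hX3, hX4⟩ := hX
  obtain ⟨hY1, hY2, hY3, hY4⟩ := hY
  have hAX : A * X = A * Y := by
    calc A * X = (A * X)ᵀ := hX3.symm
    _ = Xᵀ * Aᵀ := by rw [Matrix.transpose_mul]
    _ = Xᵀ * (A * Y * A)ᵀ := by rw [hY1]
    _ = Xᵀ * (Aᵀ * (A * Y)ᵀ) := by rw [Matrix.transpose_mul]
    _ = Xᵀ * Aᵀ * (A * Y) := by rw [hY3, Matrix.mul_assoc]
    _ = A * X * (A * Y) := by rw [← Matrix.transpose_mul, hX3]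
    _ = A * X * A * Y := by simp only [Matrix.mul_assoc]
    _ = A * Y := by rw [hX1]
  have hXA : X * A = Y * A := by
    calc X * A = (X * A)ᵀ := hX4.symm
    _ = Aᵀ * Xᵀ := by rw [Matrix.transpose_mul]
    _ = (A * Y * A)ᵀ * Xᵀ := by rw [hY1]
    _ = (Y * A)ᵀ * Aᵀ * Xᵀ := by simp only [Matrix.transpose_mul, Matrix.mul_assoc]
    _ = Y * A * (Aᵀ * Xᵀ) := by rw [hY4, Matrix.mul_assoc]
    _ = Y * A * (X * A)ᵀ := by rw [← Matrix.transpose_mul]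
    _ = Y * A * (X * A) := by rw [hX4]
    _ = Y * (A * X * A) := by rw [Matrix.mul_assoc, Matrix.mul_assoc]
    _ = Y * A := by rw [hX1]
  calc X = X * A * X := hX2.symm
  _ = Y * A * X := by rw [hXA]
  _ = Y * (A * X) := by rw [Matrix.mul_assoc]
  _ = Y * (A * Y) := by rw [hAX]
  _ = Y * A * Y := by rw [Matrix.mul_assoc]
  _ = Y := hY2

section Counting
variable {V : Type*} [Fintype V] [DecidableEq V] {G : SimpleGraph V} [DecidableRel G.Adj]

lemma ncard_filter (P : V → Prop) [DecidablePred P] :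
    {y | P y}.ncard = (Finset.univ.filter P).card := by
  rw [Set.ncard_eq_toFinset_card', Set.toFinset_setOf]

/-- sphere size -/
noncomputable def kk (G : SimpleGraph V) (x : V) (i : ℕ) : ℕ :=
  {y | G.dist x y = i}.ncard

lemma kk_eq_card (x : V) (i : ℕ) [DecidablePred fun y => G.dist x y = i] :
    kk G x i = (Finset.univ.filter fun y => G.dist x y = i).card := by
  classical
  rw [kk, ncard_filter]

lemma kk_zero (hconn : G.Connected) (x : V) : kk G x 0 = 1 := by
  have : {y | G.dist x y = 0} = {x} := by
    ext y
    simp [hconn.dist_eq_zero_iff, eq_comm]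
  rw [kk, this, Set.ncard_singleton]

lemma kk_pos {x y : V} {i : ℕ} (h : G.dist x y = i) : kk G x i ≠ 0 := by
  have : y ∈ {y | G.dist x y = i} := h
  simp only [kk, ← Set.nonempty_iff_ne_empty]
  have := Set.ncard_pos (s := {y | G.dist x y = i}) (Set.toFinite _) |>.mpr ⟨y, this⟩
  omega

lemma exists_of_kk_pos {x : V} {i : ℕ} (h : kk G x i ≠ 0) : ∃ y, G.dist x y = i := by
  by_contra hc
  push_neg at hc
  have : {y | G.dist x y = i} = ∅ := by ext y; simpa using hc y
  rw [kk, this, Set.ncard_empty] at h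
  exact h rfl

variable {d : ℕ} {b c : ℕ → ℕ}

section
variable (hconn : G.Connected) (hdd : ∀ α β : V, G.dist α β ≤ d)
  (hint : ∀ i, i ≤ d → ∀ α β : V, G.dist α β = i →
    ({γ : V | G.Adj β γ ∧ G.dist α γ = i + 1}.ncard = b i ∧
     {γ : V | G.Adj β γ ∧ G.dist α γ = i - 1}.ncard = c i))

include hint

lemma cnt_b {x y : V} {i : ℕ} (hi : i ≤ d) (h : G.dist x y = i) :
    (Finset.univ.filter fun γ => G.Adj y γ ∧ G.dist x γ = i + 1).card = b i := by
  rw [← ncard_filter]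
  exact (hint i hi x y h).1

lemma cnt_c {x y : V} {i : ℕ} (hi : i ≤ d) (h : G.dist x y = i) :
    (Finset.univ.filter fun γ => G.Adj y γ ∧ G.dist x γ = i - 1).card = c i := by
  rw [← ncard_filter]
  exact (hint i hi x y h).2

include hconn hdd

/-- at a vertex of distance `i+1` : `b i`, `c (i+1)`, `kk x i` are all nonzero -/
lemma bc_pos {x y : V} {i : ℕ} (h : G.dist x y = i + 1) :
    b i ≠ 0 ∧ c (i + 1) ≠ 0 ∧ kk G x i ≠ 0 := by
  obtain ⟨z, hadj, hz⟩ := exists_adj_dist hconn h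
  have hd1 : i + 1 ≤ d := h ▸ hdd x y
  refine ⟨?_, ?_, kk_pos hz⟩
  · have hb := cnt_b hint (by omega) hz
    have : y ∈ Finset.univ.filter fun γ => G.Adj z γ ∧ G.dist x γ = i + 1 := by
      simp [hadj, h]
    rw [← hb]
    exact Finset.card_ne_zero_of_mem this
  · have hc := cnt_c hint hd1 h
    have : z ∈ Finset.univ.filter fun γ => G.Adj y γ ∧ G.dist x γ = (i + 1) - 1 := by
      simp [hadj.symm, hz]
    rw [← hc]
    exact Finset.card_ne_zero_of_mem this

omit hconn

lemma step_pos {x : V} {i : ℕ} (hk : kk G x i ≠ 0) (hb : b i ≠ 0) : kk G x (i + 1) ≠ 0 := by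
  obtain ⟨y, hy⟩ := exists_of_kk_pos hk
  have hi : i ≤ d := hy ▸ hdd x y
  have hbcard := cnt_b hint hi hy
  have hne : (Finset.univ.filter fun γ => G.Adj y γ ∧ G.dist x γ = i + 1).Nonempty := by
    rw [← Finset.card_pos, hbcard]; omega
  obtain ⟨γ, hγ⟩ := hne
  simp only [Finset.mem_filter] at hγ
  exact kk_pos hγ.2.2


lemma double_count (x : V) {i : ℕ} (hd1 : i + 1 ≤ d) :
    kk G x (i + 1) * c (i + 1) = kk G x i * b i := by
  classical
  have key : ∀ γ : V,
      (∑ δ : V, if G.dist x γ = i ∧ G.Adj γ δ ∧ G.dist x δ = i + 1 then 1 else 0)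
        = if G.dist x γ = i then b i else 0 := by
    intro γ
    by_cases hγ : G.dist x γ = i
    · simp only [hγ, true_and, if_true]
      rw [← cnt_b hint (by omega) hγ, Finset.card_filter]
    · simp [hγ]
  have key2 : ∀ δ : V,
      (∑ γ : V, if G.dist x γ = i ∧ G.Adj γ δ ∧ G.dist x δ = i + 1 then 1 else 0)
        = if G.dist x δ = i + 1 then c (i + 1) else 0 := by
    intro δ
    by_cases hδ : G.dist x δ = i + 1
    · rw [if_pos hδ, ← cnt_c hint hd1 hδ, Finset.card_filter]
      apply Finset.sum_congr rfl
      intro γ _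
      congr 1
      simp only [Nat.add_sub_cancel, eq_iff_iff]
      constructor
      · rintro ⟨h1, h2, _⟩; exact ⟨h2.symm, h1⟩
      · rintro ⟨h1, h2⟩; exact ⟨h2, h1.symm, hδ⟩
    · rw [if_neg hδ]
      apply Finset.sum_eq_zero
      intro γ _
      simp only [ite_eq_right_iff]
      rintro ⟨_, _, h3⟩; exact absurd h3 hδ
  have lhs : (∑ γ : V, ∑ δ : V,
      if G.dist x γ = i ∧ G.Adj γ δ ∧ G.dist x δ = i + 1 then 1 else 0) = kk G x i * b i := by
    rw [Finset.sum_congr rfl fun γ _ => key γ, Finset.sum_ite, Finset.sum_const,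
      Finset.sum_const_zero, add_zero, kk_eq_card, smul_eq_mul]
  have rhs : (∑ γ : V, ∑ δ : V,
      if G.dist x γ = i ∧ G.Adj γ δ ∧ G.dist x δ = i + 1 then 1 else 0)
      = kk G x (i + 1) * c (i + 1) := by
    rw [Finset.sum_comm, Finset.sum_congr rfl fun δ _ => key2 δ, Finset.sum_ite,
      Finset.sum_const, Finset.sum_const_zero, add_zero, kk_eq_card, smul_eq_mul]
  rw [← rhs, lhs]

omit hint

lemma sum_kk (x : V) {D : ℕ} (hD : ∀ y, G.dist x y ≤ D) :
    ∑ l ∈ Finset.range (D + 1), kk G x l = Fintype.card V := by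
  classical
  rw [← Finset.card_univ,
    Finset.card_eq_sum_card_fiberwise (f := fun y => G.dist x y) (t := Finset.range (D + 1))
      (fun y _ => Finset.mem_range.mpr (by simpa using Nat.lt_succ_of_le (hD y)))]
  refine Finset.sum_congr rfl fun l _ => ?_
  rw [kk_eq_card (G := G) x l]

include hconn hint

lemma all_close_of_b_zero {x : V} {i : ℕ} (hk : kk G x i ≠ 0) (hb : b i = 0) :
    ∀ y, G.dist x y ≤ i := by
  intro y
  by_contra hy
  push_neg at hy
  obtain ⟨z, hz, _⟩ := exists_intermediate hconn (x := x) (y := y) (j := i + 1) (by omega)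
  obtain ⟨hb', _, _⟩ := bc_pos hconn hdd hint hz
  exact hb' hb

lemma kk_base_indep (x y : V) : ∀ i, kk G x i = kk G y i := by
  intro i
  induction i with
  | zero => rw [kk_zero hconn, kk_zero hconn]
  | succ i ih =>
    have hiff : ∀ u v : V, kk G u i = kk G v i → kk G u (i + 1) ≠ 0 → kk G v (i + 1) ≠ 0 := by
      intro u v huv hu
      obtain ⟨w, hw⟩ := exists_of_kk_pos hu
      obtain ⟨hb, hc, hki⟩ := bc_pos hconn hdd hint hw
      exact step_pos hdd hint (huv ▸ hki) hb
    by_cases hx : kk G x (i + 1) = 0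
    · by_cases hy : kk G y (i + 1) = 0
      · rw [hx, hy]
      · exact absurd (hiff y x ih.symm hy) (not_not.mpr hx)
    · obtain ⟨w, hw⟩ := exists_of_kk_pos hx
      obtain ⟨hb, hc, _⟩ := bc_pos hconn hdd hint hw
      have hd1 : i + 1 ≤ d := hw ▸ hdd x w
      have h1 := double_count hdd hint x hd1
      have h2 := double_count hdd hint y hd1
      rw [ih] at h1
      exact Nat.eq_of_mul_eq_mul_right (Nat.pos_of_ne_zero hc) (h1.trans h2.symm)

end
end Counting


section FF
variable {V : Type*} [Fintype V] [DecidableEq V] {G : SimpleGraph V} [DecidableRel G.Adj]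
variable {d : ℕ} {b c : ℕ → ℕ}

/-- ball size -/
noncomputable def SS (G : SimpleGraph V) (x : V) (i : ℕ) : ℕ :=
  ∑ l ∈ Finset.range (i + 1), kk G x l

/-- the radial potential profile -/
noncomputable def ff (G : SimpleGraph V) (b : ℕ → ℕ) (x : V) : ℕ → ℝ
  | 0 => 0
  | i + 1 => ff G b x i -
      ((Fintype.card V : ℝ) - (SS G x i : ℝ)) /
        ((Fintype.card V : ℝ) * (kk G x i : ℝ) * (b i : ℝ))

section
variable (hconn : G.Connected) (hdd : ∀ α β : V, G.dist α β ≤ d)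
  (hint : ∀ i, i ≤ d → ∀ α β : V, G.dist α β = i →
    ({γ : V | G.Adj β γ ∧ G.dist α γ = i + 1}.ncard = b i ∧
     {γ : V | G.Adj β γ ∧ G.dist α γ = i - 1}.ncard = c i))

include hint

lemma deg_eq (γ : V) : G.degree γ = b 0 := by
  classical
  have h := cnt_b hint (Nat.zero_le d) (SimpleGraph.dist_self (G := G) (v := γ))
  rw [← h, SimpleGraph.degree]
  congr 1
  ext δ
  simp only [SimpleGraph.mem_neighborFinset, Finset.mem_filter, Finset.mem_univ, true_and,
    zero_add]
  exact ⟨fun h' => ⟨h', SimpleGraph.dist_eq_one_iff_adj.mpr h'⟩, fun h' => h'.1⟩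

include hconn

lemma b0_pos (hN : 2 ≤ Fintype.card V) : b 0 ≠ 0 := by
  obtain ⟨u, w, huw⟩ := Fintype.exists_pair_of_one_lt_card (α := V) (by omega)
  have hd0 : G.dist u w ≠ 0 := fun h => huw (hconn.dist_eq_zero_iff.mp h)
  obtain ⟨j, hj⟩ : ∃ j, G.dist u w = j + 1 := ⟨G.dist u w - 1, by omega⟩
  obtain ⟨z, hz, _⟩ := exists_adj_dist hconn hj
  have : z ∈ G.neighborFinset w := by simp [hz.symm]
  have hdeg : G.degree w ≠ 0 := by
    rw [SimpleGraph.degree]; exact Finset.card_ne_zero_of_mem this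
  rwa [deg_eq hint w] at hdeg

include hdd

lemma lap_ff (hN : 2 ≤ Fintype.card V) (x γ : V) :
    (G.lapMatrix ℝ *ᵥ fun δ => ff G b x (G.dist x δ)) γ
      = (if γ = x then 1 else 0) - 1 / (Fintype.card V : ℝ) := by
  classical
  have hN0 : (Fintype.card V : ℝ) ≠ 0 := by positivity
  have hb0 : b 0 ≠ 0 := b0_pos hconn hint hN
  rw [SimpleGraph.lapMatrix_mulVec_apply, deg_eq hint γ]
  rcases hi : G.dist x γ with _ | j
  · -- γ = x
    have hγx : γ = x := (hconn.dist_eq_zero_iff.mp hi).symm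
    subst hγx
    have hnb : ∀ δ ∈ G.neighborFinset γ, ff G b γ (G.dist γ δ) = ff G b γ 1 := by
      intro δ hδ
      rw [SimpleGraph.mem_neighborFinset] at hδ
      rw [SimpleGraph.dist_eq_one_iff_adj.mpr hδ]
    rw [Finset.sum_congr rfl hnb, Finset.sum_const]
    have hcard : (G.neighborFinset γ).card = b 0 := deg_eq hint γ
    rw [hcard]
    have hk0 : kk G γ 0 = 1 := kk_zero hconn γ
    have hS0 : SS G γ 0 = 1 := by simp [SS, hk0]
    rw [if_pos rfl, nsmul_eq_mul]
    show (b 0 : ℝ) * 0 - (b 0 : ℝ) *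
      (ff G b γ 0 - ((Fintype.card V : ℝ) - (SS G γ 0 : ℝ)) /
        ((Fintype.card V : ℝ) * (kk G γ 0 : ℝ) * (b 0 : ℝ))) = 1 - 1 / (Fintype.card V : ℝ)
    rw [hS0, hk0]
    show (b 0 : ℝ) * 0 - (b 0 : ℝ) *
      (0 - ((Fintype.card V : ℝ) - ((1 : ℕ) : ℝ)) /
        ((Fintype.card V : ℝ) * ((1 : ℕ) : ℝ) * (b 0 : ℝ))) = 1 - 1 / (Fintype.card V : ℝ)
    have hb0' : (b 0 : ℝ) ≠ 0 := Nat.cast_ne_zero.mpr hb0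
    field_simp
    ring
  · -- γ at distance j + 1 from x
    have hγx : γ ≠ x := by
      intro h; subst h; rw [SimpleGraph.dist_self] at hi; exact (Nat.succ_ne_zero j hi.symm).elim
    rw [if_neg hγx]
    have hid : j + 1 ≤ d := hi ▸ hdd x γ
    obtain ⟨hbj, hcj, hkj⟩ := bc_pos hconn hdd hint hi
    have hkj1 : kk G x (j + 1) ≠ 0 := kk_pos hi
    have hdc : kk G x (j + 1) * c (j + 1) = kk G x j * b j := double_count hdd hint x hid
    have hPcard : ((G.neighborFinset γ).filter fun δ => G.dist x δ = j).card = c (j + 1) := by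
      rw [← cnt_c hint hid hi]
      congr 1
      ext δ
      simp only [Finset.mem_filter, SimpleGraph.mem_neighborFinset, Finset.mem_univ, true_and,
        Nat.add_sub_cancel]
    have hQcard : ((G.neighborFinset γ).filter fun δ => G.dist x δ = j + 2).card = b (j + 1) := by
      rw [← cnt_b hint hid hi]
      congr 1
      ext δ
      simp only [Finset.mem_filter, SimpleGraph.mem_neighborFinset, Finset.mem_univ, true_and]
    have hrange : ∀ δ ∈ G.neighborFinset γ,
        G.dist x δ = j ∨ G.dist x δ = j + 1 ∨ G.dist x δ = j + 2 := by
      intro δ hδ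
      rw [SimpleGraph.mem_neighborFinset] at hδ
      have h1 : G.dist x δ ≤ G.dist x γ + G.dist γ δ := hconn.dist_triangle
      have h2 : G.dist x γ ≤ G.dist x δ + G.dist δ γ := hconn.dist_triangle
      have e1 : G.dist γ δ = 1 := SimpleGraph.dist_eq_one_iff_adj.mpr hδ
      have e2 : G.dist δ γ = 1 := SimpleGraph.dist_eq_one_iff_adj.mpr hδ.symm
      omega
    -- split the neighbour sum in three parts
    have split1 := Finset.sum_filter_add_sum_filter_not (G.neighborFinset γ)
      (fun δ => G.dist x δ = j) (fun δ => ff G b x (G.dist x δ))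
    have split2 := Finset.sum_filter_add_sum_filter_not
      ((G.neighborFinset γ).filter fun δ => ¬ G.dist x δ = j)
      (fun δ => G.dist x δ = j + 2) (fun δ => ff G b x (G.dist x δ))
    have hsumP : (∑ δ ∈ (G.neighborFinset γ).filter (fun δ => G.dist x δ = j),
        ff G b x (G.dist x δ)) = (c (j + 1) : ℝ) * ff G b x j := by
      rw [Finset.sum_congr rfl (fun δ hδ => by
        rw [(Finset.mem_filter.mp hδ).2]), Finset.sum_const, hPcard, nsmul_eq_mul]
    have hQQ : ((G.neighborFinset γ).filter fun δ => ¬ G.dist x δ = j).filter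
        (fun δ => G.dist x δ = j + 2) = (G.neighborFinset γ).filter
        (fun δ => G.dist x δ = j + 2) := by
      ext δ
      simp only [Finset.mem_filter]
      constructor
      · rintro ⟨⟨h1, _⟩, h3⟩; exact ⟨h1, h3⟩
      · rintro ⟨h1, h2⟩; exact ⟨⟨h1, by omega⟩, h2⟩
    have hsumQ : (∑ δ ∈ ((G.neighborFinset γ).filter fun δ => ¬ G.dist x δ = j).filter
        (fun δ => G.dist x δ = j + 2), ff G b x (G.dist x δ))
        = (b (j + 1) : ℝ) * ff G b x (j + 2) := by
      rw [hQQ, Finset.sum_congr rfl (fun δ hδ => by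
        rw [(Finset.mem_filter.mp hδ).2]), Finset.sum_const, hQcard, nsmul_eq_mul]
    set R := (((G.neighborFinset γ).filter fun δ => ¬ G.dist x δ = j).filter
        (fun δ => ¬ G.dist x δ = j + 2)).card with hRdef
    have hsumR : (∑ δ ∈ ((G.neighborFinset γ).filter fun δ => ¬ G.dist x δ = j).filter
        (fun δ => ¬ G.dist x δ = j + 2), ff G b x (G.dist x δ))
        = (R : ℝ) * ff G b x (j + 1) := by
      rw [Finset.sum_congr rfl (fun δ hδ => by
        have h1 := Finset.mem_filter.mp hδ
        have h2 := Finset.mem_filter.mp h1.1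
        have := hrange δ h2.1
        have hd1 : G.dist x δ = j + 1 := by tauto
        rw [hd1]), Finset.sum_const, nsmul_eq_mul]
    have hcards : c (j + 1) + (b (j + 1) + R) = b 0 := by
      have t1 := Finset.card_filter_add_card_filter_not (s := G.neighborFinset γ)
        (p := fun δ => G.dist x δ = j)
      have t2 := Finset.card_filter_add_card_filter_not
        (s := (G.neighborFinset γ).filter fun δ => ¬ G.dist x δ = j)
        (p := fun δ => G.dist x δ = j + 2)
      have hdeg : (G.neighborFinset γ).card = b 0 := deg_eq hint γ
      rw [hQQ] at t2
      omega
    have htot : (∑ δ ∈ G.neighborFinset γ, ff G b x (G.dist x δ))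
        = (c (j + 1) : ℝ) * ff G b x j + ((b (j + 1) : ℝ) * ff G b x (j + 2)
          + (R : ℝ) * ff G b x (j + 1)) := by
      rw [← split1, hsumP, ← split2, hsumQ, hsumR]
    rw [htot]
    -- now pure arithmetic
    have hSS : (SS G x (j + 1) : ℝ) = SS G x j + kk G x (j + 1) := by
      rw [SS, SS, Finset.sum_range_succ]
      push_cast
      ring
    have hffj : ff G b x (j + 1) = ff G b x j -
        ((Fintype.card V : ℝ) - (SS G x j : ℝ)) /
          ((Fintype.card V : ℝ) * (kk G x j : ℝ) * (b j : ℝ)) := rfl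
    have hffj2 : ff G b x (j + 2) = ff G b x (j + 1) -
        ((Fintype.card V : ℝ) - (SS G x (j + 1) : ℝ)) /
          ((Fintype.card V : ℝ) * (kk G x (j + 1) : ℝ) * (b (j + 1) : ℝ)) := rfl
    have hbj' : (b j : ℝ) ≠ 0 := Nat.cast_ne_zero.mpr hbj
    have hcj' : (c (j + 1) : ℝ) ≠ 0 := Nat.cast_ne_zero.mpr hcj
    have hkj' : (kk G x j : ℝ) ≠ 0 := Nat.cast_ne_zero.mpr hkj
    have hkj1' : (kk G x (j + 1) : ℝ) ≠ 0 := Nat.cast_ne_zero.mpr hkj1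
    have hdc' : (kk G x (j + 1) : ℝ) * (c (j + 1) : ℝ) = (kk G x j : ℝ) * (b j : ℝ) := by
      exact_mod_cast hdc
    have hcards' : (b 0 : ℝ) = (c (j + 1) : ℝ) + (b (j + 1) : ℝ) + (R : ℝ) := by
      exact_mod_cast (by omega : b 0 = c (j + 1) + b (j + 1) + R)
    -- the key middle term
    have key2 : (b (j + 1) : ℝ) * (ff G b x (j + 1) - ff G b x (j + 2))
        = ((Fintype.card V : ℝ) - (SS G x (j + 1) : ℝ)) / ((Fintype.card V : ℝ) * (kk G x (j + 1) : ℝ)) := by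
      by_cases hb1 : b (j + 1) = 0
      · have hclose : ∀ y, G.dist x y ≤ j + 1 := all_close_of_b_zero hconn hdd hint hkj1 hb1
        have hfull : SS G x (j + 1) = Fintype.card V := sum_kk hdd x hclose
        rw [hb1, hfull]
        simp
      · have hb1' : (b (j + 1) : ℝ) ≠ 0 := Nat.cast_ne_zero.mpr hb1
        rw [hffj2]
        field_simp
        ring
    have key1 : (c (j + 1) : ℝ) * (ff G b x (j + 1) - ff G b x j)
        = -(((Fintype.card V : ℝ) - (SS G x j : ℝ)) / ((Fintype.card V : ℝ) * (kk G x (j + 1) : ℝ))) := by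
      rw [hffj]
      rw [show (Fintype.card V : ℝ) * (kk G x j : ℝ) * (b j : ℝ)
          = (Fintype.card V : ℝ) * ((kk G x (j + 1) : ℝ) * (c (j + 1) : ℝ)) by rw [hdc']; ring]
      field_simp
      ring
    have hgoal : (b 0 : ℝ) * ff G b x (j + 1) - ((c (j + 1) : ℝ) * ff G b x j
        + ((b (j + 1) : ℝ) * ff G b x (j + 2) + (R : ℝ) * ff G b x (j + 1)))
        = (c (j + 1) : ℝ) * (ff G b x (j + 1) - ff G b x j)
          + (b (j + 1) : ℝ) * (ff G b x (j + 1) - ff G b x (j + 2)) := by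
      rw [hcards']
      ring
    rw [hgoal, key1, key2, hSS]
    field_simp
    ring

end
end FF


section Potential
variable {V : Type*} [Fintype V] [DecidableEq V] {G : SimpleGraph V} [DecidableRel G.Adj]
variable {d : ℕ} {b c : ℕ → ℕ} {Lp : Matrix V V ℝ}

lemma lap_symm : (G.lapMatrix ℝ)ᵀ = G.lapMatrix ℝ := G.isSymm_lapMatrix ℝ

lemma Lp_symm (hLp : IsMoorePenrose (G.lapMatrix ℝ) Lp) : Lpᵀ = Lp := by
  set L := G.lapMatrix ℝ with hLdef
  have hL : Lᵀ = L := lap_symm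
  obtain ⟨h1, h2, h3, h4⟩ := hLp
  have c3 : (L * Lpᵀ)ᵀ = L * Lpᵀ := by
    have e1 : L * Lpᵀ = Lp * L := by
      calc L * Lpᵀ = Lᵀ * Lpᵀ := by rw [hL]
      _ = (Lp * L)ᵀ := by rw [Matrix.transpose_mul]
      _ = Lp * L := h4
    rw [e1]; exact h4
  have c4 : (Lpᵀ * L)ᵀ = Lpᵀ * L := by
    have e1 : Lpᵀ * L = L * Lp := by
      calc Lpᵀ * L = Lpᵀ * Lᵀ := by rw [hL]
      _ = (L * Lp)ᵀ := by rw [Matrix.transpose_mul]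
      _ = L * Lp := h3
    rw [e1]; exact h3
  have c1 : L * Lpᵀ * L = L := by
    apply Matrix.transpose_injective
    calc (L * Lpᵀ * L)ᵀ = Lᵀ * (Lpᵀᵀ * Lᵀ) := by
          simp only [Matrix.transpose_mul, Matrix.mul_assoc]
    _ = L * (Lp * L) := by rw [hL, Matrix.transpose_transpose]
    _ = L * Lp * L := by rw [Matrix.mul_assoc]
    _ = L := h1
    _ = Lᵀ := hL.symm
  have c2 : Lpᵀ * L * Lpᵀ = Lpᵀ := by
    apply Matrix.transpose_injective
    calc (Lpᵀ * L * Lpᵀ)ᵀ = Lpᵀᵀ * (Lᵀ * Lpᵀᵀ) := by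
          simp only [Matrix.transpose_mul, Matrix.mul_assoc]
    _ = Lp * (L * Lp) := by rw [hL, Matrix.transpose_transpose]
    _ = Lp * L * Lp := by rw [Matrix.mul_assoc]
    _ = Lp := h2
  exact mp_unique ⟨c1, c2, c3, c4⟩ ⟨h1, h2, h3, h4⟩

lemma Lp_one (hLp : IsMoorePenrose (G.lapMatrix ℝ) Lp) :
    Lp *ᵥ (fun _ => (1 : ℝ)) = 0 := by
  set L := G.lapMatrix ℝ with hLdef
  have hL : Lᵀ = L := lap_symm
  obtain ⟨h1, h2, h3, h4⟩ := hLp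
  have hL1 : L *ᵥ (fun _ => (1 : ℝ)) = 0 := SimpleGraph.lapMatrix_mulVec_const_eq_zero G
  have h5 : (L * Lp) *ᵥ (fun _ => (1 : ℝ)) = 0 := by
    rw [← h3, Matrix.transpose_mul, hL, ← Matrix.mulVec_mulVec, hL1, Matrix.mulVec_zero]
  rw [← h2, Matrix.mul_assoc, ← Matrix.mulVec_mulVec, h5, Matrix.mulVec_zero]

variable (hconn : G.Connected) (hdd : ∀ α β : V, G.dist α β ≤ d)
  (hint : ∀ i, i ≤ d → ∀ α β : V, G.dist α β = i →
    ({γ : V | G.Adj β γ ∧ G.dist α γ = i + 1}.ncard = b i ∧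
     {γ : V | G.Adj β γ ∧ G.dist α γ = i - 1}.ncard = c i))

include hconn hdd hint

lemma pot (hN : 2 ≤ Fintype.card V) (hLp : IsMoorePenrose (G.lapMatrix ℝ) Lp) (x y : V) :
    Lp x x - Lp y x = - ff G b x (G.dist x y) := by
  classical
  set L := G.lapMatrix ℝ with hLdef
  set v : V → ℝ := fun δ => ff G b x (G.dist x δ) with hv
  have hLv : L *ᵥ v = fun γ => (if γ = x then 1 else 0) - 1 / (Fintype.card V : ℝ) :=
    funext fun γ => lap_ff hconn hdd hint hN x γ
  have hPv : L *ᵥ ((Lp * L) *ᵥ v) = L *ᵥ v := by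
    rw [Matrix.mulVec_mulVec, ← Matrix.mul_assoc, hLp.1]
  have hconst : ∀ γ δ : V, (v - (Lp * L) *ᵥ v) γ = (v - (Lp * L) *ᵥ v) δ := by
    have hker : Matrix.toLin' L (v - (Lp * L) *ᵥ v) = 0 := by
      rw [Matrix.toLin'_apply, Matrix.mulVec_sub, hPv, sub_self]
    intro γ δ
    exact G.lapMatrix_mulVec_eq_zero_iff_forall_reachable.mp (by rwa [Matrix.toLin'_apply] at hker) γ δ
      (hconn γ δ)
  have heval : (Lp * L) *ᵥ v = fun γ => Lp γ x := by
    have he : (fun γ => (if γ = x then (1:ℝ) else 0) - 1 / (Fintype.card V : ℝ))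
        = (fun γ => if γ = x then (1:ℝ) else 0)
          - (1 / (Fintype.card V : ℝ)) • (fun _ => (1:ℝ)) := by
      funext γ; simp
    rw [← Matrix.mulVec_mulVec, hLv, he, Matrix.mulVec_sub, Matrix.mulVec_smul,
      Lp_one hLp, smul_zero, sub_zero]
    funext γ
    simp only [Matrix.mulVec, dotProduct, mul_ite, mul_one, mul_zero]
    rw [Finset.sum_ite_eq' Finset.univ x (fun δ => Lp γ δ)]
    simp
  have hxy := hconst x y
  simp only [Pi.sub_apply, heval] at hxy
  have hvx : v x = 0 := by
    simp only [hv]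
    rw [SimpleGraph.dist_self]
    rfl
  have hvy : v y = ff G b x (G.dist x y) := rfl
  rw [hvx, hvy] at hxy
  linarith

lemma ff_indep (x y : V) : ∀ i, ff G b x i = ff G b y i := by
  intro i
  induction i with
  | zero => rfl
  | succ i ih =>
    have h1 : ff G b x (i + 1) = ff G b x i -
        ((Fintype.card V : ℝ) - (SS G x i : ℝ)) /
          ((Fintype.card V : ℝ) * (kk G x i : ℝ) * (b i : ℝ)) := rfl
    have h2 : ff G b y (i + 1) = ff G b y i -
        ((Fintype.card V : ℝ) - (SS G y i : ℝ)) /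
          ((Fintype.card V : ℝ) * (kk G y i : ℝ) * (b i : ℝ)) := rfl
    have hk : ∀ l, kk G x l = kk G y l := fun l => kk_base_indep hconn hdd hint x y l
    have hS : SS G x i = SS G y i := by
      rw [SS, SS]
      exact Finset.sum_congr rfl fun l _ => hk l
    rw [h1, h2, ih, hS, hk i]

end Potential

end ERaux

/-- In a distance-regular graph on `N ≥ 2` vertices of diameter `d`, the effective
resistance between vertices at graph distance `m` is strictly increasing in `m` for
`1 ≤ m ≤ d`: vertices at distance `m + 1` have strictly larger resistance than vertices
at distance `m`. -/
theorem effective_resistance_strict_mono {V : Type*} [Fintype V] [DecidableEq V]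
    (G : SimpleGraph V) [DecidableRel G.Adj] (d : ℕ) (b c : ℕ → ℕ)
    (hdr : IsDistanceRegular G d b c) (hN : 2 ≤ Fintype.card V)
    (Lp : Matrix V V ℝ) (hLp : IsMoorePenrose (G.lapMatrix ℝ) Lp)
    (m : ℕ) (hm1 : 1 ≤ m) (hmd : m + 1 ≤ d)
    (α β β' : V) (hβ : G.dist α β = m) (hβ' : G.dist α β' = m + 1) :
    effRes Lp α β < effRes Lp α β' := by
  classical
  obtain ⟨hconn, hdd, hint⟩ := hdr
  -- symmetry of the pseudoinverse
  have hsym : Lpᵀ = Lp := ERaux.Lp_symm hLp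
  have hs : ∀ u w : V, Lp u w = Lp w u := fun u w => by
    conv_lhs => rw [← hsym]
    rfl
  -- the four potential identities
  have p1 : Lp α α - Lp β α = - ERaux.ff G b α m := by
    have := ERaux.pot hconn hdd hint hN hLp α β
    rwa [hβ] at this
  have p2 : Lp β β - Lp α β = - ERaux.ff G b α m := by
    have := ERaux.pot hconn hdd hint hN hLp β α
    rw [SimpleGraph.dist_comm, hβ] at this
    rwa [ERaux.ff_indep hconn hdd hint β α m] at this
  have p3 : Lp α α - Lp β' α = - ERaux.ff G b α (m + 1) := by
    have := ERaux.pot hconn hdd hint hN hLp α β'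
    rwa [hβ'] at this
  have p4 : Lp β' β' - Lp α β' = - ERaux.ff G b α (m + 1) := by
    have := ERaux.pot hconn hdd hint hN hLp β' α
    rw [SimpleGraph.dist_comm, hβ'] at this
    rwa [ERaux.ff_indep hconn hdd hint β' α (m + 1)] at this
  have e1 : effRes Lp α β = - 2 * ERaux.ff G b α m := by
    have hba : Lp β α = Lp α β := hs β α
    rw [effRes]
    linarith
  have e2 : effRes Lp α β' = - 2 * ERaux.ff G b α (m + 1) := by
    have hba : Lp β' α = Lp α β' := hs β' α
    rw [effRes]
    linarith
  rw [e1, e2]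
  -- strict decrease of the profile
  have hstep : ERaux.ff G b α (m + 1) = ERaux.ff G b α m -
      ((Fintype.card V : ℝ) - (ERaux.SS G α m : ℝ)) /
        ((Fintype.card V : ℝ) * (ERaux.kk G α m : ℝ) * (b m : ℝ)) := rfl
  have hkm : ERaux.kk G α m ≠ 0 := ERaux.kk_pos hβ
  have hkm1 : ERaux.kk G α (m + 1) ≠ 0 := ERaux.kk_pos hβ'
  obtain ⟨hbm, -, -⟩ := ERaux.bc_pos hconn hdd hint hβ'
  have hSm : ERaux.SS G α m + ERaux.kk G α (m + 1) ≤ Fintype.card V := by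
    have htot : ∑ l ∈ Finset.range (d + 1), ERaux.kk G α l = Fintype.card V :=
      ERaux.sum_kk hdd α (fun y => hdd α y)
    have hsub : ∑ l ∈ Finset.range (m + 2), ERaux.kk G α l
        ≤ ∑ l ∈ Finset.range (d + 1), ERaux.kk G α l :=
      Finset.sum_le_sum_of_subset (Finset.range_subset_range.mpr (by omega))
    have hsucc : ∑ l ∈ Finset.range (m + 2), ERaux.kk G α l
        = ERaux.SS G α m + ERaux.kk G α (m + 1) := Finset.sum_range_succ _ _
    omega
  have hnum : (0 : ℝ) < (Fintype.card V : ℝ) - (ERaux.SS G α m : ℝ) := by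
    have : ERaux.SS G α m + 1 ≤ Fintype.card V := by omega
    have := (Nat.cast_le (α := ℝ)).mpr this
    push_cast at this
    linarith
  have hden : (0 : ℝ) < (Fintype.card V : ℝ) * (ERaux.kk G α m : ℝ) * (b m : ℝ) := by
    have h1 : (0:ℝ) < (Fintype.card V : ℝ) := by exact_mod_cast (by omega : 0 < Fintype.card V)
    have h2 : (0:ℝ) < (ERaux.kk G α m : ℝ) := by
      exact_mod_cast Nat.pos_of_ne_zero hkm
    have h3 : (0:ℝ) < (b m : ℝ) := by exact_mod_cast Nat.pos_of_ne_zero hbm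
    exact mul_pos (mul_pos h1 h2) h3
  have : ERaux.ff G b α (m + 1) < ERaux.ff G b α m := by
    rw [hstep]
    have := div_pos hnum hden
    linarith
  linarith
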